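/- Given any admissible RNG sequence a and any n, the sequence a' defined by a'(k) = a(k) for k ≥ n and, by downward recursion, a'(k) = (a'(k+1) − 1)/2 rounded down for k < n (precisely a'(k) chosen so that 2a'(k) ≤ a'(k+1) ≤ 2a'(k)+2) yields an admissible sequence generating the same real number as a. -/

import Mathlib

theorem stmt_6 (a a' : ℕ → ℤ) (n : ℕ)
    (hadm : ∀ k, a (k + 1) = 2 * a k ∨ a (k + 1) = 2 * a k + 1 ∨ a (k + 1) = 2 * a k + 2)
    (hge : ∀ k, n ≤ k → a' k = a k)
    (hlt : ∀ k, k < n → 2 * a' k ≤ a' (k + 1) ∧ a' (k + 1) ≤ 2 * a' k + 2) :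
    (∀ k, a' (k + 1) = 2 * a' k ∨ a' (k + 1) = 2 * a' k + 1 ∨ a' (k + 1) = 2 * a' k + 2) ∧
    (∀ x y : ℝ,
      (∀ k : ℕ, x ∈ Set.Icc ((a k : ℝ) / 2 ^ k) ((a k + 2 : ℝ) / 2 ^ k)) →
      (∀ k : ℕ, y ∈ Set.Icc ((a' k : ℝ) / 2 ^ k) ((a' k + 2 : ℝ) / 2 ^ k)) →
      x = y) := by
  constructor
  · intro k
    by_cases hk : k < n
    · have := hlt k hk
      omega
    · push_neg at hk
      rw [hge k hk, hge (k + 1) (Nat.le_succ_of_le hk)]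
      exact hadm k
  · intro x y hx hy
    have h1 : ∀ m : ℕ, |x - y| ≤ 2 / 2 ^ (n + m) := by
      intro m
      have hxm := hx (n + m)
      have hym := hy (n + m)
      rw [hge (n + m) (Nat.le_add_right n m)] at hym
      simp only [Set.mem_Icc] at hxm hym
      have hpow : (0:ℝ) < 2 ^ (n + m) := by positivity
      have key : ((a (n + m) : ℝ) + 2) / 2 ^ (n + m) - (a (n + m) : ℝ) / 2 ^ (n + m)
          = 2 / 2 ^ (n + m) := by ring
      rw [abs_sub_le_iff]
      constructor <;> linarith [hxm.1, hxm.2, hym.1, hym.2]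
    have h2 : Filter.Tendsto (fun m : ℕ => (2:ℝ) / 2 ^ (n + m)) Filter.atTop (nhds 0) := by
      have h3 : Filter.Tendsto (fun m : ℕ => ((1:ℝ)/2) ^ m) Filter.atTop (nhds 0) :=
        tendsto_pow_atTop_nhds_zero_of_lt_one (by norm_num) (by norm_num)
      have h4 := h3.const_mul ((2:ℝ) / 2 ^ n)
      rw [mul_zero] at h4
      convert h4 using 2 with m
      rw [pow_add]
      field_simp
      rw [← mul_pow]; norm_num
    have h5 : |x - y| ≤ 0 := ge_of_tendsto' h2 h1
    have := abs_nonneg (x - y)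
    have : x - y = 0 := by
      have := abs_eq_zero.mp (le_antisymm h5 (abs_nonneg _))
      exact this
    linarith
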